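/- Conservation of isotropic invariants under vanishing corotational rate: let I : ℝ^{3×3} → ℝ be differentiable with I(Q A Qᵀ) = I(A) for every orthogonal Q ∈ O(3) and every A ∈ ℝ^{3×3}. Let t ↦ σ(t) be a differentiable curve of symmetric 3×3 matrices and t ↦ Ω(t) a curve of skew-symmetric 3×3 matrices such that σ'(t) = Ω(t) σ(t) − σ(t) Ω(t) for all t (i.e. the corotational derivative of σ vanishes). Then t ↦ I(σ(t)) is constant: its derivative is identically zero. -/

import Mathlib

open Matrix

noncomputable section

attribute [local instance] Matrix.frobeniusNormedAddCommGroup Matrix.frobeniusNormedSpace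

attribute [local instance] Matrix.frobeniusNormedRing Matrix.frobeniusNormedAlgebra

open NormedSpace in
lemma key_lemma (I : Matrix (Fin 3) (Fin 3) ℝ → ℝ) (hI : Differentiable ℝ I)
    (hinv : ∀ Q A : Matrix (Fin 3) (Fin 3) ℝ, Qᵀ * Q = 1 → I (Q * A * Qᵀ) = I A)
    (A W : Matrix (Fin 3) (Fin 3) ℝ) (hW : Wᵀ = -W) :
    fderiv ℝ I A (W * A - A * W) = 0 := by
  set Q : ℝ → Matrix (Fin 3) (Fin 3) ℝ := fun s => exp (s • W) with hQ
  have hQT : ∀ s, (Q s)ᵀ = exp (s • (-W)) := by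
    intro s
    rw [hQ, ← Matrix.exp_transpose, transpose_smul, hW, smul_neg]
  have hQorth : ∀ s, (Q s)ᵀ * Q s = 1 := by
    intro s
    rw [hQT s, hQ]
    rw [← Matrix.exp_add_of_commute _ _ (by simpa using (Commute.refl (s • W)).neg_left)]
    simp [exp_zero]
  -- derivative of Q at 0 is W
  have hQd : HasDerivAt Q W 0 := by
    have h := hasDerivAt_exp_smul_const (𝕂 := ℝ) W 0; simp [exp_zero] at h; exact h
  have hQTd : HasDerivAt (fun s => (Q s)ᵀ) (-W) 0 := by
    have : HasDerivAt (fun s : ℝ => exp (s • (-W))) (-W) 0 := by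
      have h := hasDerivAt_exp_smul_const (𝕂 := ℝ) (-W) 0; simp only [zero_smul, exp_zero, one_mul] at h; exact h
    exact this.congr_deriv rfl |>.congr_of_eventuallyEq
      (Filter.Eventually.of_forall fun s => (hQT s))
  -- F s = Q s * A * (Q s)ᵀ
  have hFd : HasDerivAt (fun s => Q s * A * (Q s)ᵀ) (W * A - A * W) 0 := by
    have h1 : HasDerivAt (fun s => Q s * A) (W * A) 0 := by
      have h := hQd.mul_const A; exact h
    have h2 := h1.mul hQTd
    have e0 : Q 0 = 1 := by simp [hQ, exp_zero]
    rw [e0] at h2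
    simp [sub_eq_add_neg, mul_neg] at h2; exact h2
  have hconst : (fun s => I (Q s * A * (Q s)ᵀ)) = fun _ => I A := by
    funext s; exact hinv (Q s) A (hQorth s)
  have hcomp : HasDerivAt (fun s => I (Q s * A * (Q s)ᵀ))
      (fderiv ℝ I (Q 0 * A * (Q 0)ᵀ) (W * A - A * W)) 0 :=
    (hI _).hasFDerivAt.comp_hasDerivAt 0 hFd
  have e0 : Q 0 = 1 := by simp [hQ, exp_zero]
  rw [e0] at hcomp
  simp only [Matrix.one_mul, Matrix.transpose_one, Matrix.mul_one] at hcomp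
  have : deriv (fun s => I (Q s * A * (Q s)ᵀ)) 0 = 0 := by
    rw [hconst]; simp
  rw [hcomp.deriv] at this
  exact this

/-- If the corotational derivative of a symmetric matrix curve `σ`
vanishes, i.e. `σ'(t) = Ω(t) σ(t) − σ(t) Ω(t)`, then any differentiable isotropic scalar
invariant `I` is conserved: `(d/dt) I(σ(t)) = 0`. -/
theorem isotropic_invariant_conserved
    (I : Matrix (Fin 3) (Fin 3) ℝ → ℝ) (hI : Differentiable ℝ I)
    (hinv : ∀ Q A : Matrix (Fin 3) (Fin 3) ℝ, Qᵀ * Q = 1 → I (Q * A * Qᵀ) = I A)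
    (σ : ℝ → Matrix (Fin 3) (Fin 3) ℝ) (hsym : ∀ t, (σ t)ᵀ = σ t)
    (Ω : ℝ → Matrix (Fin 3) (Fin 3) ℝ) (hΩ : ∀ t, (Ω t)ᵀ = -(Ω t))
    (hσ : ∀ t, HasDerivAt σ (Ω t * σ t - σ t * Ω t) t) :
    ∀ t, deriv (fun s => I (σ s)) t = 0 := by
  intro t
  have hcomp : HasDerivAt (fun s => I (σ s))
      (fderiv ℝ I (σ t) (Ω t * σ t - σ t * Ω t)) t :=
    (hI (σ t)).hasFDerivAt.comp_hasDerivAt t (hσ t)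
  rw [hcomp.deriv]
  exact key_lemma I hI hinv (σ t) (Ω t) (hΩ t)
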